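/- arXiv:2003.13831 — 3 statements merged into one kernel-verified Lean document; each statement's English description precedes it below -/
import Mathlib

section
/- For any forward nested regular expression E, any graphs G and H, any simulation relation R of G by H, and any nodes n, m with (n, m) ∈ R: if (n, n') ∈ ⟦E⟧_G for some node n' of G, then there exists a node m' of H such that (m, m') ∈ ⟦E⟧_H and (n', m') ∈ R. -/
variable {N L : Type*}

def nodes (G : Set (N × L × N)) : Set N :=
  {n | ∃ p m, (n, p, m) ∈ G ∨ (m, p, n) ∈ G}

def IsSimulation (G H : Set (N × L × N)) (R : N → N → Prop) : Prop :=
  (∀ n m, R n m → n ∈ nodes G ∧ m ∈ nodes H) ∧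
  (∀ n m, R n m → ∀ p n', (n, p, n') ∈ G → ∃ m', (m, p, m') ∈ H ∧ R n' m')

/-- Forward nested regular expressions. -/
inductive NRE (N L : Type*) where
  | eps : NRE N L
  | pred : L → NRE N L
  | wild : NRE N L
  | node : N → NRE N L
  | test : NRE N L → NRE N L
  | star : NRE N L → NRE N L
  | comp : NRE N L → NRE N L → NRE N L
  | alt : NRE N L → NRE N L → NRE N L

/-- Semantics of forward NREs as binary relations on nodes. -/
def sem (G : Set (N × L × N)) : NRE N L → N → N → Prop
  | .eps => fun n m => n = m ∧ n ∈ nodes G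
  | .pred p => fun n m => (n, p, m) ∈ G
  | .wild => fun n m => ∃ p, (n, p, m) ∈ G
  | .node ℓ => fun n m => n = m ∧ n = ℓ ∧ n ∈ nodes G
  | .test e => fun n m => n = m ∧ ∃ k, sem G e n k
  | .star e => Relation.ReflTransGen (sem G e)
  | .comp e1 e2 => fun n m => ∃ k, sem G e1 n k ∧ sem G e2 k m
  | .alt e1 e2 => fun n m => sem G e1 n m ∨ sem G e2 n m

/-- Node labels (constants) tested by an NRE. -/
def labels : NRE N L → Set N
  | .eps => ∅
  | .pred _ => ∅
  | .wild => ∅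
  | .node ℓ => {ℓ}
  | .test e => labels e
  | .star e => labels e
  | .comp e1 e2 => labels e1 ∪ labels e2
  | .alt e1 e2 => labels e1 ∪ labels e2

/-- Simulation preserves forward NRE semantics: if `R` is a simulation of `G` by `H`
that respects constant node labels, `(n, m) ∈ R` and `(n, n') ∈ ⟦E⟧_G`, then there is
`m'` with `(m, m') ∈ ⟦E⟧_H` and `(n', m') ∈ R`. -/
theorem nre_forward_simulation (Const : Set N) (E : NRE N L)
    (G H : Set (N × L × N)) (R : N → N → Prop)
    (hsim : IsSimulation G H R)
    (hconst : ∀ n m, R n m → n ∈ Const → m = n)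
    (hE : labels E ⊆ Const)
    (n m n' : N) (hR : R n m) (hsem : sem G E n n') :
    ∃ m', sem H E m m' ∧ R n' m' := by
  induction E generalizing n m n' with
  | eps =>
    obtain ⟨rfl, _⟩ := hsem
    exact ⟨m, ⟨rfl, (hsim.1 n m hR).2⟩, hR⟩
  | pred p =>
    exact hsim.2 n m hR p n' hsem
  | wild =>
    obtain ⟨p, hp⟩ := hsem
    obtain ⟨m', hm', hR'⟩ := hsim.2 n m hR p n' hp
    exact ⟨m', ⟨p, hm'⟩, hR'⟩
  | node ℓ =>
    obtain ⟨rfl, rfl, _⟩ := hsem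
    have hm := hconst _ _ hR (hE rfl)
    subst hm
    exact ⟨_, ⟨rfl, rfl, (hsim.1 _ _ hR).2⟩, hR⟩
  | test e ih =>
    obtain ⟨rfl, k, hk⟩ := hsem
    obtain ⟨m', hm', _⟩ := ih hE n m k hR hk
    exact ⟨m, ⟨rfl, m', hm'⟩, hR⟩
  | star e ih =>
    induction hsem with
    | refl => exact ⟨m, Relation.ReflTransGen.refl, hR⟩
    | tail _ hstep ih2 =>
      obtain ⟨m₁, hm₁, hR₁⟩ := ih2
      obtain ⟨m', hm', hR'⟩ := ih hE _ _ _ hR₁ hstep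
      exact ⟨m', hm₁.tail hm', hR'⟩
  | comp e1 e2 ih1 ih2 =>
    obtain ⟨k, h1, h2⟩ := hsem
    obtain ⟨m₁, hm₁, hR₁⟩ := ih1 (fun x hx => hE (Or.inl hx)) n m k hR h1
    obtain ⟨m', hm', hR'⟩ := ih2 (fun x hx => hE (Or.inr hx)) k m₁ n' hR₁ h2
    exact ⟨m', ⟨m₁, hm₁, hm'⟩, hR'⟩
  | alt e1 e2 ih1 ih2 =>
    rcases hsem with h | h
    · obtain ⟨m', hm', hR'⟩ := ih1 (fun x hx => hE (Or.inl hx)) n m n' hR h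
      exact ⟨m', Or.inl hm', hR'⟩
    · obtain ⟨m', hm', hR'⟩ := ih2 (fun x hx => hE (Or.inr hx)) n m n' hR h
      exact ⟨m', Or.inr hm', hR'⟩
end

section
/- The class of forward nested regular expressions is robust under simulation: if graph G is simulated by graph H (every node of G is simulated by some node of H), then for any forward NRE E, if ⟦E⟧_G is nonempty then ⟦E⟧_H is nonempty. -/
variable {N L : Type*}

/-- A simulation respecting constant nodes. -/
def IsCSimulation (Const : Set N) (G H : Set (N × L × N)) (R : N → N → Prop) : Prop :=
  IsSimulation G H R ∧ ∀ n m, R n m → n ∈ Const → m = n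

/-- `G` is simulated by `H`: some (constant-respecting) simulation relates every
node of `G` to some node of `H`. -/
def SimulatedBy (Const : Set N) (G H : Set (N × L × N)) : Prop :=
  ∃ R, IsCSimulation Const G H R ∧ ∀ n ∈ nodes G, ∃ m, R n m

lemma sim_step (Const : Set N) (G H : Set (N × L × N)) (R : N → N → Prop)
    (hR : IsCSimulation Const G H R) :
    ∀ (E : NRE N L), labels E ⊆ Const → ∀ n n' m, sem G E n n' → R n m →
      ∃ m', sem H E m m' ∧ R n' m' := by
  intro E
  induction E with
  | eps =>
    rintro _ n n' m ⟨rfl, _⟩ hRnm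
    exact ⟨m, ⟨rfl, (hR.1.1 n m hRnm).2⟩, hRnm⟩
  | pred p =>
    intro _ n n' m h hRnm
    obtain ⟨m', hm', hR'⟩ := hR.1.2 n m hRnm p n' h
    exact ⟨m', hm', hR'⟩
  | wild =>
    rintro _ n n' m ⟨p, h⟩ hRnm
    obtain ⟨m', hm', hR'⟩ := hR.1.2 n m hRnm p n' h
    exact ⟨m', ⟨p, hm'⟩, hR'⟩
  | node ℓ =>
    rintro hl n n' m ⟨rfl, rfl, _⟩ hRnm
    have hm : m = n := hR.2 n m hRnm (hl rfl)
    subst hm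
    exact ⟨m, ⟨rfl, rfl, (hR.1.1 m m hRnm).2⟩, hRnm⟩
  | test e ih =>
    rintro hl n n' m ⟨rfl, k, hk⟩ hRnm
    obtain ⟨k', hk', _⟩ := ih hl n k m hk hRnm
    exact ⟨m, ⟨rfl, k', hk'⟩, hRnm⟩
  | star e ih =>
    intro hl n n' m h hRnm
    simp only [sem] at h ⊢
    induction h generalizing m with
    | refl => exact ⟨m, .refl, hRnm⟩
    | tail _ hstep ih2 =>
      rename_i b c _
      obtain ⟨m1, hm1, hRb⟩ := ih2 m hRnm
      obtain ⟨m2, hm2, hRc⟩ := ih hl b c m1 hstep hRb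
      exact ⟨m2, hm1.tail hm2, hRc⟩
  | comp e1 e2 ih1 ih2 =>
    rintro hl n n' m ⟨k, h1, h2⟩ hRnm
    obtain ⟨k', hk', hRk⟩ := ih1 (fun x hx => hl (Or.inl hx)) n k m h1 hRnm
    obtain ⟨m', hm', hR'⟩ := ih2 (fun x hx => hl (Or.inr hx)) k n' k' h2 hRk
    exact ⟨m', ⟨k', hk', hm'⟩, hR'⟩
  | alt e1 e2 ih1 ih2 =>
    rintro hl n n' m (h | h) hRnm
    · obtain ⟨m', hm', hR'⟩ := ih1 (fun x hx => hl (Or.inl hx)) n n' m h hRnm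
      exact ⟨m', Or.inl hm', hR'⟩
    · obtain ⟨m', hm', hR'⟩ := ih2 (fun x hx => hl (Or.inr hx)) n n' m h hRnm
      exact ⟨m', Or.inr hm', hR'⟩

lemma sem_node_or_trivial (G : Set (N × L × N)) :
    ∀ (E : NRE N L) n n', sem G E n n' →
      n ∈ nodes G ∨ (n' = n ∧ ∀ K : Set (N × L × N), sem K E n n) := by
  intro E
  induction E with
  | eps => rintro n n' ⟨rfl, h⟩; exact Or.inl h
  | pred p => rintro n n' h; exact Or.inl ⟨p, n', Or.inl h⟩
  | wild => rintro n n' ⟨p, h⟩; exact Or.inl ⟨p, n', Or.inl h⟩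
  | node ℓ => rintro n n' ⟨rfl, rfl, h⟩; exact Or.inl h
  | test e ih =>
    rintro n n' ⟨rfl, k, hk⟩
    rcases ih n k hk with h | ⟨rfl, h⟩
    · exact Or.inl h
    · exact Or.inr ⟨rfl, fun K => ⟨rfl, k, h K⟩⟩
  | star e ih =>
    intro n n' h
    simp only [sem] at h
    induction h with
    | refl => exact Or.inr ⟨rfl, fun K => Relation.ReflTransGen.refl⟩
    | tail _ hstep ih2 =>
      rcases ih2 with h | ⟨rfl, _⟩
      · exact Or.inl h
      · rcases ih _ _ hstep with h | ⟨rfl, h⟩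
        · exact Or.inl h
        · exact Or.inr ⟨rfl, fun K => Relation.ReflTransGen.refl⟩
  | comp e1 e2 ih1 ih2 =>
    rintro n n' ⟨k, h1, h2⟩
    rcases ih1 n k h1 with h | ⟨rfl, h⟩
    · exact Or.inl h
    · rcases ih2 _ n' h2 with h' | ⟨rfl, h'⟩
      · exact Or.inl h'
      · exact Or.inr ⟨rfl, fun K => ⟨n', h K, h' K⟩⟩
  | alt e1 e2 ih1 ih2 =>
    rintro n n' (h | h)
    · rcases ih1 n n' h with h' | ⟨rfl, h'⟩
      · exact Or.inl h'
      · exact Or.inr ⟨rfl, fun K => Or.inl (h' K)⟩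
    · rcases ih2 n n' h with h' | ⟨rfl, h'⟩
      · exact Or.inl h'
      · exact Or.inr ⟨rfl, fun K => Or.inr (h' K)⟩

/-- Forward NREs are robust under simulation: if `G` is simulated by `H` and
`⟦E⟧_G` is nonempty, then `⟦E⟧_H` is nonempty. -/
theorem forward_nre_robust_under_simulation (Const : Set N) (E : NRE N L)
    (G H : Set (N × L × N))
    (hE : labels E ⊆ Const)
    (hsim : SimulatedBy Const G H)
    (hne : ∃ n n', sem G E n n') :
    ∃ m m', sem H E m m' := by
  obtain ⟨n, n', hsem⟩ := hne
  obtain ⟨R, hR, htot⟩ := hsim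
  rcases sem_node_or_trivial G E n n' hsem with hn | ⟨rfl, h⟩
  · obtain ⟨m, hm⟩ := htot n hn
    obtain ⟨m', hm', _⟩ := sim_step Const G H R hR E hE n n' m hsem hm
    exact ⟨m, m', hm'⟩
  · exact ⟨n', n', h H⟩
end

section
/- If J is a typed graph satisfying the type-propagation and predicate-functionality dependencies of a deterministic shape schema S, and the co-occurring type sets N_J (as constructed by iterating Δ from the frontier of J) contain no set X with both Literal and some non-literal type T, then J ∪ G_S satisfies all predicate-functionality dependencies of S, where G_S is the completion graph constructed by adding, for each frontier pair and each required predicate, exactly one fresh outgoing edge per (node, predicate) pair. -/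
/-- Multiplicities of shape constraints. -/
inductive Mult | one | opt | star | plus

/-- A deterministic shape schema: at most one constraint per (type, predicate). -/
structure DShape (T P : Type*) where
  delta : T → P → Option (T × Mult)

/-- A typed graph: a set of triples together with a typing of nodes. -/
structure TGraph (N T P : Type*) where
  edges : Set (N × P × N)
  types : N → Set T

variable {N T P : Type*}

/-- Nodes of a typed graph. -/
def gnodes (J : TGraph N T P) : Set N :=
  {n | (∃ p m, (n, p, m) ∈ J.edges ∨ (m, p, n) ∈ J.edges) ∨ (J.types n).Nonempty}

/-- Satisfaction of all type-propagation dependencies. -/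
def SatTP (S : DShape T P) (J : TGraph N T P) : Prop :=
  ∀ n t p s μ m, t ∈ J.types n → S.delta t p = some (s, μ) →
    (n, p, m) ∈ J.edges → s ∈ J.types m

/-- Satisfaction of all predicate-functionality dependencies (μ ∈ {1, ?}). -/
def SatPF (S : DShape T P) (J : TGraph N T P) : Prop :=
  ∀ n t p s μ, t ∈ J.types n → S.delta t p = some (s, μ) →
    (μ = Mult.one ∨ μ = Mult.opt) →
    ∀ m m', (n, p, m) ∈ J.edges → (n, p, m') ∈ J.edges → m = m'

/-- Predicates required by a set of types (μ ∈ {1, +}). -/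
def Req (S : DShape T P) (X : Set T) : Set P :=
  {p | ∃ t ∈ X, ∃ s, S.delta t p = some (s, Mult.one) ∨ S.delta t p = some (s, Mult.plus)}

/-- Types that must hold at any node reached by a `p`-edge from a node with types `X`. -/
def Del (S : DShape T P) (X : Set T) (p : P) : Set T :=
  {s | ∃ t ∈ X, ∃ μ, S.delta t p = some (s, μ)}

/-- The frontier of `J`: pairs `(n, p)` where `n` requires an outgoing `p`-edge
but has none. -/
def Frontier (S : DShape T P) (J : TGraph N T P) : Set (N × P) :=
  {x | x.1 ∈ gnodes J ∧ x.2 ∈ Req S (J.types x.1) ∧ ¬ ∃ m, (x.1, x.2, m) ∈ J.edges}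

/-- The iterated sets of co-occurring types starting from the frontier of `J`. -/
def NJ (S : DShape T P) (J : TGraph N T P) : ℕ → Set (Set T)
  | 0 => {X | ∃ x ∈ Frontier S J, X = Del S (J.types x.1) x.2}
  | i + 1 => {Y | ∃ X ∈ NJ S J i, ∃ p ∈ Req S X, Y = Del S X p}

/-- Union of two typed graphs. -/
def unionG (J K : TGraph N T P) : TGraph N T P :=
  ⟨J.edges ∪ K.edges, fun n => J.types n ∪ K.types n⟩

/-- If `J` satisfies the type-propagation and predicate-functionality dependencies
of a deterministic shape schema `S`, the co-occurring type sets contain no set mixing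
`Literal` with a non-literal type, and `K` is a completion graph that adds exactly one
fresh outgoing edge per (node, predicate) pair and only at frontier pairs of `J`, then
`J ∪ K` satisfies all predicate-functionality dependencies of `S`. -/
theorem completion_satisfies_pf (S : DShape T P) (J K : TGraph N T P)
    (IsLit : T → Prop)
    (hTP : SatTP S J) (hPF : SatPF S J)
    (hnoclash : ∀ i X, X ∈ NJ S J i → ¬ ∃ t ∈ X, IsLit t ∧ ∃ t' ∈ X, ¬ IsLit t')
    (hKsrc : ∀ n p m, (n, p, m) ∈ K.edges → n ∈ gnodes J → (n, p) ∈ Frontier S J)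
    (hKfun : ∀ n p m m', (n, p, m) ∈ K.edges → (n, p, m') ∈ K.edges → m = m')
    (hKfreshT : ∀ n, (K.types n).Nonempty → n ∉ gnodes J) :
    SatPF S (unionG J K) := by
  intro n t p s μ ht hδ hμ m m' hm hm'
  have hJnode : ∀ q (x : N), (n, q, x) ∈ J.edges → n ∈ gnodes J := by
    intro q x hx; exact Or.inl ⟨q, x, Or.inl hx⟩
  rcases hm with hm | hm <;> rcases hm' with hm' | hm'
  · -- both in J
    rcases ht with ht | ht
    · exact hPF n t p s μ ht hδ hμ m m' hm hm'
    · exact absurd (hJnode p m hm) (hKfreshT n ⟨t, ht⟩)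
  · exact absurd (hm) ((hKsrc n p m' hm' (hJnode p m hm)).2.2 ⟨m, hm⟩ |>.elim)
  · exact absurd (hm') ((hKsrc n p m hm (hJnode p m' hm')).2.2 ⟨m', hm'⟩ |>.elim)
  · exact hKfun n p m m' hm hm'
end
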